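/- For any ξ ∈ F_q((T^{-1})) and any positive integer n, the uniform exponent satisfies λ̂_n(ξ) = λ̂_n(ξ^p), where p is the characteristic. -/

import Mathlib

open Polynomial
open scoped Classical

namespace MahlerKoksmaFq

noncomputable section

variable (Fq : Type) [Field Fq] [Fintype Fq]

/-- `K Fq` models `F_q((T⁻¹))`: Laurent series in the variable `t = T⁻¹`. -/
abbrev K := LaurentSeries Fq

/-- The element `T` (the inverse of the Laurent-series variable `t = T⁻¹`). -/
def Tvar : K Fq := HahnSeries.single (-1 : ℤ) 1

/-- The absolute value `|ξ| = q^{-ν(ξ)}` on `F_q((T⁻¹))`. -/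
def absK (ξ : K Fq) : ℝ :=
  if ξ = 0 then 0 else (Fintype.card Fq : ℝ) ^ (-(HahnSeries.order ξ))

/-- The embedding of `F_q[T]` into `F_q((T⁻¹))`, sending `T` to `Tvar`. -/
def emb : Polynomial Fq →+* K Fq :=
  Polynomial.eval₂RingHom (algebraMap Fq (K Fq)) (Tvar Fq)

/-- Evaluation of `P ∈ F_q[T][X]` at `ξ ∈ F_q((T⁻¹))`. -/
def evalK (P : Polynomial (Polynomial Fq)) (ξ : K Fq) : K Fq :=
  P.eval₂ (emb Fq) ξ

/-- Height of a polynomial over `F_q[T]`: the maximum of the absolute values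
`q^{deg c}` of its coefficients. -/
def HP (P : Polynomial (Polynomial Fq)) : ℝ :=
  (Fintype.card Fq : ℝ) ^ (P.support.sup fun i => (P.coeff i).natDegree)

/-- `ξ` is algebraic (over `F_q[T]`) of degree at most `n`. -/
def IsAlgDegLe (ξ : K Fq) (n : ℕ) : Prop :=
  ∃ P : Polynomial (Polynomial Fq), P ≠ 0 ∧ P.natDegree ≤ n ∧ evalK Fq P ξ = 0

/-- `ξ` is algebraic over `F_q[T]`. -/
def IsAlgK (ξ : K Fq) : Prop :=
  ∃ P : Polynomial (Polynomial Fq), P ≠ 0 ∧ evalK Fq P ξ = 0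

/-- The degree of an algebraic element of `F_q((T⁻¹))`. -/
def degA (α : K Fq) : ℕ :=
  sInf {d | ∃ P : Polynomial (Polynomial Fq), P ≠ 0 ∧ P.natDegree = d ∧ evalK Fq P α = 0}

/-- The height of an algebraic element `α` of `F_q((T⁻¹))`: the least height of a
 nonzero annihilating polynomial of minimal degree (= height of the minimal
 defining polynomial over `F_q[T]`). -/
def HA (α : K Fq) : ℝ :=
  sInf {h | ∃ P : Polynomial (Polynomial Fq),
    P ≠ 0 ∧ P.natDegree = degA Fq α ∧ evalK Fq P α = 0 ∧ h = HP Fq P}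

/-- The defining set for Mahler's exponent `w_n`. -/
def wnSet (ξ : K Fq) (n : ℕ) : Set ℝ :=
  {w | {P : Polynomial (Polynomial Fq) |
      P.natDegree ≤ n ∧ 0 < absK Fq (evalK Fq P ξ) ∧
      absK Fq (evalK Fq P ξ) < HP Fq P ^ (-w)}.Infinite}

/-- Mahler's exponent `w_n(ξ)`. -/
def wn (ξ : K Fq) (n : ℕ) : EReal :=
  sSup ((fun w : ℝ => (w : EReal)) '' wnSet Fq ξ n)

/-- The defining set for `w_n^{sep}` (separable polynomials only). -/
def wnsepSet (ξ : K Fq) (n : ℕ) : Set ℝ :=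
  {w | {P : Polynomial (Polynomial Fq) |
      P.Separable ∧ P.natDegree ≤ n ∧ 0 < absK Fq (evalK Fq P ξ) ∧
      absK Fq (evalK Fq P ξ) < HP Fq P ^ (-w)}.Infinite}

/-- The exponent `w_n^{sep}(ξ)`. -/
def wnsep (ξ : K Fq) (n : ℕ) : EReal :=
  sSup ((fun w : ℝ => (w : EReal)) '' wnsepSet Fq ξ n)

/-- The defining set for Koksma's exponent `w_n^*` (approximation by algebraic
elements lying in `F_q((T⁻¹))`). -/
def wnstarSet (ξ : K Fq) (n : ℕ) : Set ℝ :=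
  {w | {α : K Fq | IsAlgK Fq α ∧ degA Fq α ≤ n ∧ 0 < absK Fq (ξ - α) ∧
      absK Fq (ξ - α) < HA Fq α ^ (-w - 1)}.Infinite}

/-- Koksma's exponent `w_n^*(ξ)`. -/
def wnstar (ξ : K Fq) (n : ℕ) : EReal :=
  sSup ((fun w : ℝ => (w : EReal)) '' wnstarSet Fq ξ n)

/-- The defining set for the uniform exponent `ŵ_n`. -/
def hwnSet (ξ : K Fq) (n : ℕ) : Set ℝ :=
  {w | ∃ H0 : ℝ, ∀ H : ℝ, H0 < H → ∃ P : Polynomial (Polynomial Fq),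
      P.natDegree ≤ n ∧ HP Fq P ≤ H ∧ 0 < absK Fq (evalK Fq P ξ) ∧
      absK Fq (evalK Fq P ξ) < H ^ (-w)}

/-- The uniform exponent `ŵ_n(ξ)`. -/
def hwn (ξ : K Fq) (n : ℕ) : EReal :=
  sSup ((fun w : ℝ => (w : EReal)) '' hwnSet Fq ξ n)

/-- The defining set for the uniform exponent `ŵ_n^{sep}` (separable polynomials only). -/
def hwnsepSet (ξ : K Fq) (n : ℕ) : Set ℝ :=
  {w | ∃ H0 : ℝ, ∀ H : ℝ, H0 < H → ∃ P : Polynomial (Polynomial Fq),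
      P.Separable ∧ P.natDegree ≤ n ∧ HP Fq P ≤ H ∧ 0 < absK Fq (evalK Fq P ξ) ∧
      absK Fq (evalK Fq P ξ) < H ^ (-w)}

/-- The uniform exponent `ŵ_n^{sep}(ξ)`. -/
def hwnsep (ξ : K Fq) (n : ℕ) : EReal :=
  sSup ((fun w : ℝ => (w : EReal)) '' hwnsepSet Fq ξ n)

/-- The fractional part of a Laurent series in `T⁻¹`: the part with only
 negative powers of `T` (positive powers of the series variable `t = T⁻¹`). -/
def fracPart (η : K Fq) : K Fq :=
  { coeff := fun m => if 0 < m then η.coeff m else 0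
    isPWO_support' := η.isPWO_support'.mono (fun m hm => by
      by_cases h : 0 < m
      · simpa [Function.mem_support, h] using hm
      · simp [Function.mem_support, h] at hm) }

/-- The fractional-part norm `‖η‖ = |η - [η]|`. -/
def fracNorm (η : K Fq) : ℝ := absK Fq (fracPart Fq η)

/-- `max{‖R(T)ξ‖, …, ‖R(T)ξⁿ‖}`. -/
def maxFrac (ξ : K Fq) (n : ℕ) (R : Polynomial Fq) : ℝ :=
  sSup ((fun i => fracNorm Fq (emb Fq R * ξ ^ i)) '' Set.Icc 1 n)

/-- The defining set for the exponent of simultaneous approximation `λ_n`. -/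
def lamSet (ξ : K Fq) (n : ℕ) : Set ℝ :=
  {l | {R : Polynomial Fq | 0 < maxFrac Fq ξ n R ∧
      maxFrac Fq ξ n R < (Fintype.card Fq : ℝ) ^ (-(l * R.natDegree))}.Infinite}

/-- The exponent of simultaneous approximation `λ_n(ξ)`. -/
def lam (ξ : K Fq) (n : ℕ) : EReal :=
  sSup ((fun w : ℝ => (w : EReal)) '' lamSet Fq ξ n)

/-- The defining set for the uniform exponent `λ̂_n`. -/
def hlamSet (ξ : K Fq) (n : ℕ) : Set ℝ :=
  {l | ∃ d0 : ℕ, ∀ d : ℕ, d0 < d → ∃ R : Polynomial Fq, R.natDegree ≤ d ∧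
      0 < maxFrac Fq ξ n R ∧
      maxFrac Fq ξ n R < (Fintype.card Fq : ℝ) ^ (-(l * d))}

/-- The uniform exponent `λ̂_n(ξ)`. -/
def hlam (ξ : K Fq) (n : ℕ) : EReal :=
  sSup ((fun w : ℝ => (w : EReal)) '' hlamSet Fq ξ n)

/-- An algebraic closure of `F_q((T⁻¹))`; its algebraic elements are exactly the
algebraic elements of the completion `C_∞`. -/
abbrev Kbar := AlgebraicClosure (K Fq)

/-- The embedding of `F_q[T]` into the algebraic closure. -/
def embbar : Polynomial Fq →+* Kbar Fq :=
  (algebraMap (K Fq) (Kbar Fq)).comp (emb Fq)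

/-- Evaluation of `P ∈ F_q[T][X]` at a point of the algebraic closure. -/
def evalKbar (P : Polynomial (Polynomial Fq)) (x : Kbar Fq) : Kbar Fq :=
  P.eval₂ (embbar Fq) x

/-- The unique extension of the absolute value of `F_q((T⁻¹))` to its algebraic
closure: `|x| = |N(x)|^{1/d} = |a_0|^{1/d}` where `a_0` is the constant term and
`d` the degree of the minimal polynomial of `x` over `F_q((T⁻¹))`. -/
def absC (x : Kbar Fq) : ℝ :=
  absK Fq ((minpoly (K Fq) x).coeff 0) ^ ((1 : ℝ) / (minpoly (K Fq) x).natDegree)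

/-- `x ∈ C_∞` is algebraic over `F_q[T]`. -/
def IsAlgKbar (x : Kbar Fq) : Prop :=
  ∃ P : Polynomial (Polynomial Fq), P ≠ 0 ∧ evalKbar Fq P x = 0

/-- Degree over `F_q[T]` of an algebraic element of `C_∞`. -/
def degAbar (x : Kbar Fq) : ℕ :=
  sInf {d | ∃ P : Polynomial (Polynomial Fq), P ≠ 0 ∧ P.natDegree = d ∧ evalKbar Fq P x = 0}

/-- Height of an algebraic element of `C_∞`. -/
def HAbar (x : Kbar Fq) : ℝ :=
  sInf {h | ∃ P : Polynomial (Polynomial Fq),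
    P ≠ 0 ∧ P.natDegree = degAbar Fq x ∧ evalKbar Fq P x = 0 ∧ h = HP Fq P}

/-- The defining set for the exponent `w_n^@` (approximation by algebraic
elements of `C_∞`). -/
def wnAtSet (ξ : K Fq) (n : ℕ) : Set ℝ :=
  {w | {α : Kbar Fq | IsAlgKbar Fq α ∧ degAbar Fq α ≤ n ∧
      0 < absC Fq (algebraMap (K Fq) (Kbar Fq) ξ - α) ∧
      absC Fq (algebraMap (K Fq) (Kbar Fq) ξ - α) < HAbar Fq α ^ (-w - 1)}.Infinite}

/-- The exponent `w_n^@(ξ)`. -/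
def wnAt (ξ : K Fq) (n : ℕ) : EReal :=
  sSup ((fun w : ℝ => (w : EReal)) '' wnAtSet Fq ξ n)

/-- The defining set for the uniform exponent `ŵ_n^@`. -/
def hwnAtSet (ξ : K Fq) (n : ℕ) : Set ℝ :=
  {w | ∃ H0 : ℝ, ∀ H : ℝ, H0 < H → ∃ α : Kbar Fq, IsAlgKbar Fq α ∧ degAbar Fq α ≤ n ∧
      HAbar Fq α ≤ H ∧ 0 < absC Fq (algebraMap (K Fq) (Kbar Fq) ξ - α) ∧
      absC Fq (algebraMap (K Fq) (Kbar Fq) ξ - α) < (HAbar Fq α)⁻¹ * H ^ (-w)}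

/-- The uniform exponent `ŵ_n^@(ξ)`. -/
def hwnAt (ξ : K Fq) (n : ℕ) : EReal :=
  sSup ((fun w : ℝ => (w : EReal)) '' hwnAtSet Fq ξ n)

/-- `w(ξ) = limsup_n w_n(ξ)/n`. -/
def wlim (ξ : K Fq) : EReal :=
  Filter.atTop.limsup fun n : ℕ => wn Fq ξ n * (((n : ℝ)⁻¹ : ℝ) : EReal)

/-- `w^*(ξ) = limsup_n w_n^*(ξ)/n`. -/
def wlimstar (ξ : K Fq) : EReal :=
  Filter.atTop.limsup fun n : ℕ => wnstar Fq ξ n * (((n : ℝ)⁻¹ : ℝ) : EReal)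

/-- Height of a polynomial over `C_∞`: maximum of the absolute values of its
coefficients. -/
def HC (P : Polynomial (Kbar Fq)) : ℝ :=
  sSup ((fun i => absC Fq (P.coeff i)) '' Set.Iic P.natDegree)


/-! ### Auxiliary lemmas for the Frobenius invariance of `λ̂_n` -/

section FrobeniusAux

lemma one_lt_qcard : (1:ℝ) < (Fintype.card Fq : ℝ) := by
  exact_mod_cast Fintype.one_lt_card

lemma qcard_pos : (0:ℝ) < (Fintype.card Fq : ℝ) := lt_trans one_pos (one_lt_qcard Fq)

lemma absK_nonneg (x : K Fq) : 0 ≤ absK Fq x := by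
  unfold absK
  split
  · exact le_rfl
  · exact (zpow_pos (qcard_pos Fq) _).le

lemma absK_zero : absK Fq (0 : K Fq) = 0 := if_pos rfl

lemma absK_pos {x : K Fq} (hx : x ≠ 0) : 0 < absK Fq x := by
  unfold absK
  rw [if_neg hx]
  exact zpow_pos (qcard_pos Fq) _

lemma absK_one : absK Fq (1 : K Fq) = 1 := by
  unfold absK
  rw [if_neg one_ne_zero, HahnSeries.order_one]
  simp

lemma absK_mul (x y : K Fq) : absK Fq (x * y) = absK Fq x * absK Fq y := by
  by_cases hx : x = 0
  · simp [hx, absK_zero]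
  by_cases hy : y = 0
  · simp [hy, absK_zero]
  have hxy : x * y ≠ 0 := mul_ne_zero hx hy
  unfold absK
  rw [if_neg hx, if_neg hy, if_neg hxy, HahnSeries.order_mul hx hy, neg_add,
    zpow_add₀ (ne_of_gt (qcard_pos Fq))]

lemma absK_pow (x : K Fq) (m : ℕ) : absK Fq (x ^ m) = absK Fq x ^ m := by
  induction m with
  | zero => simp [absK_one]
  | succ k ih => rw [pow_succ, pow_succ, absK_mul, ih]

lemma fracPart_coeff (x : K Fq) (m : ℤ) :
    (fracPart Fq x).coeff m = if 0 < m then x.coeff m else 0 := rfl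

lemma fracPart_add (x y : K Fq) :
    fracPart Fq (x + y) = fracPart Fq x + fracPart Fq y := by
  ext m
  rw [HahnSeries.coeff_add, fracPart_coeff, fracPart_coeff, fracPart_coeff, HahnSeries.coeff_add]
  split <;> simp

lemma fracPart_zero : fracPart Fq (0 : K Fq) = 0 := by
  ext m
  rw [fracPart_coeff]
  split <;> simp

/-- `fracPart` as an additive monoid hom. -/
def fracPartHom : K Fq →+ K Fq where
  toFun := fracPart Fq
  map_zero' := fracPart_zero Fq
  map_add' := fracPart_add Fq

lemma fracPart_eq_zero {x : K Fq} (h : ∀ m ∈ x.support, m ≤ 0) : fracPart Fq x = 0 := by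
  ext m
  rw [fracPart_coeff, HahnSeries.coeff_zero]
  split_ifs with hm
  · by_cases hc : x.coeff m = 0
    · exact hc
    · exact absurd (h m ((HahnSeries.mem_support x m).mpr hc)) (not_le.mpr hm)
  · rfl

lemma fracPart_eq_self {x : K Fq} (h : ∀ m ∈ x.support, 0 < m) : fracPart Fq x = x := by
  ext m
  rw [fracPart_coeff]
  split_ifs with hm
  · rfl
  · by_cases hc : x.coeff m = 0
    · exact hc.symm
    · exact absurd (h m ((HahnSeries.mem_support x m).mpr hc)) hm

lemma support_fracPart (x : K Fq) : ∀ m ∈ (fracPart Fq x).support, 0 < m := by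
  intro m hm
  rw [HahnSeries.mem_support, fracPart_coeff] at hm
  by_contra h
  rw [if_neg h] at hm
  exact hm rfl

lemma support_intPart (x : K Fq) : ∀ m ∈ (x - fracPart Fq x).support, m ≤ 0 := by
  intro m hm
  rw [HahnSeries.mem_support, HahnSeries.coeff_sub, fracPart_coeff] at hm
  by_contra h
  rw [if_pos (not_le.mp h), sub_self] at hm
  exact hm rfl

lemma support_mul_le {x y : K Fq} {a b : ℤ} (hx : ∀ m ∈ x.support, m ≤ a)
    (hy : ∀ m ∈ y.support, m ≤ b) : ∀ m ∈ (x * y).support, m ≤ a + b := by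
  intro m hm
  obtain ⟨u, hu, v, hv, rfl⟩ := Set.mem_add.mp (HahnSeries.support_mul_subset hm)
  exact add_le_add (hx u hu) (hy v hv)

lemma support_pow_nonpos {x : K Fq} (hx : ∀ m ∈ x.support, m ≤ 0) (k : ℕ) :
    ∀ m ∈ (x ^ k).support, m ≤ 0 := by
  induction k with
  | zero =>
    intro m hm
    rw [pow_zero, HahnSeries.mem_support, HahnSeries.coeff_one] at hm
    by_cases h : m = 0
    · exact h.le
    · exact absurd (if_neg h) hm
  | succ k ih =>
    intro m hm
    rw [pow_succ] at hm
    simpa using support_mul_le Fq ih hx m hm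

lemma support_pow_ge {x : K Fq} (hx : ∀ m ∈ x.support, 1 ≤ m) (k : ℕ) :
    ∀ m ∈ (x ^ k).support, (k : ℤ) ≤ m := by
  induction k with
  | zero =>
    intro m hm
    rw [pow_zero, HahnSeries.mem_support, HahnSeries.coeff_one] at hm
    by_cases h : m = 0
    · simp [h]
    · exact absurd (if_neg h) hm
  | succ k ih =>
    intro m hm
    rw [pow_succ] at hm
    obtain ⟨u, hu, v, hv, rfl⟩ := Set.mem_add.mp (HahnSeries.support_mul_subset hm)
    have := ih u hu
    have := hx v hv
    push_cast
    omega

lemma support_pow_gt {x : K Fq} {M : ℤ} (hM : 0 ≤ M) (hx : ∀ m ∈ x.support, M < m) (k : ℕ)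
    (hk : 1 ≤ k) : ∀ m ∈ (x ^ k).support, M < m := by
  induction k with
  | zero => omega
  | succ k ih =>
    rcases Nat.eq_or_lt_of_le hk with h1 | h1
    · rw [← h1, pow_one]
      exact hx
    · intro m hm
      rw [pow_succ] at hm
      obtain ⟨u, hu, v, hv, rfl⟩ := Set.mem_add.mp (HahnSeries.support_mul_subset hm)
      have h2 := ih (by omega) u hu
      have h3 := hx v hv
      omega

section CharPStuff

variable (p : ℕ) [hp : Fact p.Prime] [CharP Fq p]

lemma charP_K : CharP (K Fq) p :=
  charP_of_injective_ringHom (f := (HahnSeries.C : Fq →+* K Fq)) (HahnSeries.C_injective) p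

lemma coeff_pow_char_ne_zero (x : K Fq) {m : ℤ}
    (h : (x ^ p).coeff m ≠ 0) : ∃ k, x.coeff k ≠ 0 ∧ m = (p : ℤ) * k := by
  classical
  haveI := charP_K Fq p
  set M : ℤ := max m 0 with hM
  have hfin : (x.support ∩ Set.Iic M).Finite := by
    rcases eq_or_ne x 0 with rfl | hx0
    · simp [HahnSeries.support_zero]
    · apply (Set.finite_Icc x.order M).subset
      rintro k ⟨hk1, hk2⟩
      exact ⟨HahnSeries.order_le_of_coeff_ne_zero hk1, hk2⟩
  set F := hfin.toFinset with hF
  set z₁ : K Fq := ∑ k ∈ F, HahnSeries.single k (x.coeff k) with hz₁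
  have hz₁coeff : ∀ k : ℤ, z₁.coeff k = if k ∈ F then x.coeff k else 0 := by
    intro k
    have h1 : z₁.coeff k = ∑ j ∈ F, (HahnSeries.single j (x.coeff j)).coeff k :=
      map_sum (HahnSeries.coeff.addMonoidHom k) _ F
    rw [h1]
    simp only [HahnSeries.coeff_single]
    by_cases hkF : k ∈ F
    · rw [Finset.sum_eq_single_of_mem k hkF, if_pos rfl, if_pos hkF]
      intro j _ hjk
      rw [if_neg (Ne.symm hjk)]
    · rw [if_neg hkF, Finset.sum_eq_zero]
      intro j hj
      rw [if_neg (fun hkj => hkF (by rw [hkj]; exact hj))]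
  have hz₂coeff : ∀ k ≤ M, (x - z₁).coeff k = 0 := by
    intro k hk
    rw [HahnSeries.coeff_sub, hz₁coeff]
    by_cases hkF : k ∈ F
    · rw [if_pos hkF, sub_self]
    · rw [if_neg hkF]
      have hxk : x.coeff k = 0 := by
        by_contra hc
        exact hkF (hfin.mem_toFinset.mpr ⟨hc, hk⟩)
      rw [hxk, sub_zero]
  have hsplit : x ^ p = z₁ ^ p + (x - z₁) ^ p := by
    rw [← add_pow_char, add_sub_cancel]
  have h2 : ((x - z₁) ^ p).coeff m = 0 := by
    rcases eq_or_ne (x - z₁) 0 with hz | hz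
    · rw [hz, zero_pow hp.out.ne_zero, HahnSeries.coeff_zero]
    · have hsup : ∀ k ∈ (x - z₁).support, M < k := by
        intro k hk
        by_contra hc
        exact ((HahnSeries.mem_support _ _).mp hk) (hz₂coeff k (not_lt.mp hc))
      by_contra hc
      have hmem : m ∈ ((x - z₁) ^ p).support := (HahnSeries.mem_support _ _).mpr hc
      exact absurd (support_pow_gt Fq (le_max_right m 0) hsup p hp.out.one_le m hmem)
        (not_lt.mpr (le_max_left m 0))
  have h1 : (z₁ ^ p).coeff m ≠ 0 := by
    rw [hsplit, HahnSeries.coeff_add, h2, add_zero] at h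
    exact h
  have hz₁p : z₁ ^ p = ∑ k ∈ F, HahnSeries.single ((p : ℤ) * k) (x.coeff k ^ p) := by
    rw [hz₁, sum_pow_char]
    refine Finset.sum_congr rfl fun k _ => ?_
    rw [HahnSeries.single_pow]
    norm_num
  rw [hz₁p] at h1
  have h3 : (∑ k ∈ F, HahnSeries.single ((p:ℤ) * k) (x.coeff k ^ p)).coeff m
      = ∑ k ∈ F, (HahnSeries.single ((p:ℤ) * k) (x.coeff k ^ p)).coeff m :=
    map_sum (HahnSeries.coeff.addMonoidHom m) _ F
  rw [h3] at h1
  obtain ⟨k, _, hkne⟩ := Finset.exists_ne_zero_of_sum_ne_zero h1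
  rw [HahnSeries.coeff_single] at hkne
  by_cases hmk : m = (p:ℤ) * k
  · refine ⟨k, ?_, hmk⟩
    rw [if_pos hmk] at hkne
    intro hc
    exact hkne (by rw [hc, zero_pow hp.out.ne_zero])
  · rw [if_neg hmk] at hkne
    exact absurd rfl hkne

lemma fracPart_pow_char (x : K Fq) :
    fracPart Fq (x ^ p) = fracPart Fq x ^ p := by
  haveI := charP_K Fq p
  have hsplit : x ^ p = (x - fracPart Fq x) ^ p + fracPart Fq x ^ p := by
    rw [← add_pow_char, sub_add_cancel]
  rw [hsplit, fracPart_add, fracPart_eq_zero Fq (support_pow_nonpos Fq (support_intPart Fq x) p),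
    zero_add]
  refine fracPart_eq_self Fq fun m hm => ?_
  have h1 := support_pow_ge Fq (fun m hm => (support_fracPart Fq x m hm)) p m hm
  have h2 : (0:ℤ) < p := by exact_mod_cast hp.out.pos
  omega

lemma fracPart_single_mul_pow_char (j : ℕ) (hj : j < p) (x : K Fq) :
    fracPart Fq (HahnSeries.single (-(j:ℤ)) 1 * x ^ p)
      = HahnSeries.single (-(j:ℤ)) 1 * fracPart Fq x ^ p := by
  haveI := charP_K Fq p
  have hsingle : ∀ m ∈ (HahnSeries.single (-(j:ℤ)) (1:Fq)).support, m ≤ -(j:ℤ) := by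
    intro m hm
    have := HahnSeries.support_single_subset hm
    simp only [Set.mem_singleton_iff] at this
    omega
  have hsplit : x ^ p = (x - fracPart Fq x) ^ p + fracPart Fq x ^ p := by
    rw [← add_pow_char, sub_add_cancel]
  rw [hsplit, mul_add, fracPart_add]
  have hA : fracPart Fq (HahnSeries.single (-(j:ℤ)) 1 * (x - fracPart Fq x) ^ p) = 0 := by
    refine fracPart_eq_zero Fq fun m hm => ?_
    have := support_mul_le Fq hsingle
      (support_pow_nonpos Fq (support_intPart Fq x) p) m hm
    omega
  have hB : fracPart Fq (HahnSeries.single (-(j:ℤ)) 1 * fracPart Fq x ^ p)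
      = HahnSeries.single (-(j:ℤ)) 1 * fracPart Fq x ^ p := by
    refine fracPart_eq_self Fq fun m hm => ?_
    obtain ⟨u, hu, v, hv, rfl⟩ := Set.mem_add.mp (HahnSeries.support_mul_subset hm)
    have h1 : u = -(j:ℤ) := by
      have := HahnSeries.support_single_subset hu
      simpa using this
    have h2 := support_pow_ge Fq (fun m hm => support_fracPart Fq x m hm) p v hv
    have h3 : (j:ℤ) < p := by exact_mod_cast hj
    omega
  rw [hA, hB, zero_add]

lemma absK_sum_single_pow_ge (B : ℕ → K Fq) (j₀ : ℕ) (hj₀ : j₀ < p) (hB : B j₀ ≠ 0) :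
    absK Fq (B j₀) ^ p
      ≤ absK Fq (∑ j ∈ Finset.range p, HahnSeries.single (-(j:ℤ)) 1 * B j ^ p) := by
  haveI := charP_K Fq p
  set C : ℕ → K Fq := fun j => HahnSeries.single (-(j:ℤ)) 1 * B j ^ p with hC
  have hCcoeff : ∀ j m, (C j).coeff m ≠ 0 → ∃ k : ℤ, m = -(j:ℤ) + (p:ℤ) * k := by
    intro j m hm
    obtain ⟨u, hu, v, hv, rfl⟩ := Set.mem_add.mp
      (HahnSeries.support_mul_subset ((HahnSeries.mem_support _ _).mpr hm))
    have h1 : u = -(j:ℤ) := by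
      have := HahnSeries.support_single_subset hu
      simpa using this
    obtain ⟨k, _, hk⟩ := coeff_pow_char_ne_zero Fq p (B j) ((HahnSeries.mem_support _ _).mp hv)
    exact ⟨k, by rw [h1, hk]⟩
  have hCj₀ : C j₀ ≠ 0 :=
    mul_ne_zero (HahnSeries.single_ne_zero one_ne_zero) (pow_ne_zero _ hB)
  set m₀ := (C j₀).order with hm₀
  have hcoeffj₀ : (C j₀).coeff m₀ ≠ 0 := mt HahnSeries.coeff_order_eq_zero.mp hCj₀
  have hothers : ∀ j ∈ Finset.range p, j ≠ j₀ → (C j).coeff m₀ = 0 := by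
    intro j hjmem hjne
    by_contra hc
    obtain ⟨k, hk⟩ := hCcoeff j m₀ hc
    obtain ⟨k₀, hk₀⟩ := hCcoeff j₀ m₀ hcoeffj₀
    have hj' : (j:ℤ) < p := by exact_mod_cast Finset.mem_range.mp hjmem
    have hj₀' : (j₀:ℤ) < p := by exact_mod_cast hj₀
    have hdvd : (p:ℤ) ∣ ((j₀:ℤ) - j) := ⟨k₀ - k, by linarith [mul_sub (p:ℤ) k₀ k]⟩
    have habs : |(j₀:ℤ) - j| < p := by
      rw [abs_lt]
      constructor <;> [linarith [Int.natCast_nonneg j₀]; linarith [Int.natCast_nonneg j]]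
    have := Int.eq_zero_of_abs_lt_dvd hdvd habs
    have : (j₀:ℤ) = j := by omega
    exact hjne (by exact_mod_cast this.symm)
  have hsum_coeff : (∑ j ∈ Finset.range p, C j).coeff m₀ ≠ 0 := by
    have h3 : (∑ j ∈ Finset.range p, C j).coeff m₀ = ∑ j ∈ Finset.range p, (C j).coeff m₀ :=
      map_sum (HahnSeries.coeff.addMonoidHom m₀) _ _
    rw [h3, Finset.sum_eq_single j₀ hothers
      (fun h => absurd (Finset.mem_range.mpr hj₀) h)]
    exact hcoeffj₀
  have hsne : (∑ j ∈ Finset.range p, C j) ≠ 0 := by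
    intro h
    rw [h, HahnSeries.coeff_zero] at hsum_coeff
    exact hsum_coeff rfl
  have horder : (∑ j ∈ Finset.range p, C j).order ≤ m₀ :=
    HahnSeries.order_le_of_coeff_ne_zero hsum_coeff
  have hstep1 : absK Fq (B j₀) ^ p ≤ absK Fq (C j₀) := by
    rw [hC]
    simp only
    rw [absK_mul, absK_pow]
    have h1 : (1:ℝ) ≤ absK Fq (HahnSeries.single (-(j₀:ℤ)) (1:Fq)) := by
      unfold absK
      rw [if_neg (HahnSeries.single_ne_zero one_ne_zero),
        HahnSeries.order_single one_ne_zero]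
      calc (1:ℝ) = (Fintype.card Fq : ℝ) ^ (0:ℤ) := by simp
        _ ≤ _ := zpow_le_zpow_right₀ (one_lt_qcard Fq).le (by omega)
    exact le_mul_of_one_le_left (pow_nonneg (absK_nonneg Fq _) p) h1
  have hstep2 : absK Fq (C j₀) ≤ absK Fq (∑ j ∈ Finset.range p, C j) := by
    unfold absK
    rw [if_neg hCj₀, if_neg hsne]
    exact zpow_le_zpow_right₀ (one_lt_qcard Fq).le (neg_le_neg horder)
  exact le_trans hstep1 hstep2

/-- The `j`-th piece of the `p`-th root decomposition `R = ∑_j T^j (R_j)^p`. -/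
def pieces (R : Polynomial Fq) (j : ℕ) : Polynomial Fq :=
  ∑ k ∈ Finset.range (R.natDegree + 1),
    Polynomial.C ((frobeniusEquiv Fq p).symm (R.coeff (p * k + j))) * Polynomial.X ^ k

lemma pieces_coeff (R : Polynomial Fq) (j k : ℕ) :
    (pieces Fq p R j).coeff k = (frobeniusEquiv Fq p).symm (R.coeff (p * k + j)) := by
  classical
  unfold pieces
  rw [Polynomial.finset_sum_coeff]
  simp_rw [Polynomial.coeff_C_mul, Polynomial.coeff_X_pow, mul_ite, mul_one, mul_zero]
  rw [Finset.sum_ite_eq (Finset.range (R.natDegree + 1)) k]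
  split_ifs with hk
  · rfl
  · have hk1 : R.natDegree < k := by
      rw [Finset.mem_range] at hk
      omega
    have hk2 : R.natDegree < p * k + j := by
      have : k ≤ p * k := Nat.le_mul_of_pos_left k hp.out.pos
      omega
    rw [Polynomial.coeff_eq_zero_of_natDegree_lt hk2, map_zero]

lemma pieces_natDegree_le (R : Polynomial Fq) (j d : ℕ) (hR : R.natDegree ≤ p * d) :
    (pieces Fq p R j).natDegree ≤ d := by
  rw [Polynomial.natDegree_le_iff_coeff_eq_zero]
  intro m hm
  rw [pieces_coeff]
  have h1 : p * d < p * m := mul_lt_mul_of_pos_left hm hp.out.pos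
  have h2 : R.natDegree < p * m + j := by omega
  rw [Polynomial.coeff_eq_zero_of_natDegree_lt h2, map_zero]

lemma pieces_decomp (R : Polynomial Fq) :
    ∑ j ∈ Finset.range p, Polynomial.X ^ j * pieces Fq p R j ^ p = R := by
  classical
  have hp0 : 0 < p := hp.out.pos
  ext m
  rw [Polynomial.finset_sum_coeff]
  have hterm : ∀ j, (Polynomial.X ^ j * pieces Fq p R j ^ p).coeff m
      = if j ≤ m then (if p ∣ (m - j) then R.coeff (p * ((m - j) / p) + j) else 0) else 0 := by
    intro j
    rw [(Polynomial.commute_X_pow (pieces Fq p R j ^ p) j).eq, Polynomial.coeff_mul_X_pow']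
    by_cases h1 : j ≤ m
    · rw [if_pos h1, if_pos h1, ← Polynomial.map_frobenius_expand, Polynomial.coeff_map,
        Polynomial.coeff_expand hp0]
      by_cases h2 : p ∣ (m - j)
      · rw [if_pos h2, if_pos h2, pieces_coeff]
        exact (frobeniusEquiv Fq p).apply_symm_apply _
      · rw [if_neg h2, if_neg h2, map_zero]
    · rw [if_neg h1, if_neg h1]
  rw [Finset.sum_congr rfl fun j _ => hterm j]
  have hmem : m % p ∈ Finset.range p := Finset.mem_range.mpr (Nat.mod_lt m hp0)
  rw [Finset.sum_eq_single_of_mem (m % p) hmem]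
  · have h1 : m % p ≤ m := Nat.mod_le m p
    have hmd : m = p * (m / p) + m % p := (Nat.div_add_mod m p).symm
    have hsub : m - m % p = p * (m / p) := Nat.sub_eq_of_eq_add hmd
    have h2 : p ∣ (m - m % p) := ⟨m / p, hsub⟩
    rw [if_pos h1, if_pos h2, hsub, Nat.mul_div_cancel_left _ hp0, ← hmd]
  · intro j hjmem hjne
    split_ifs with h1 h2
    · exfalso
      obtain ⟨c, hc⟩ := h2
      have hjp : j < p := Finset.mem_range.mp hjmem
      have hm' : m = p * c + j := (Nat.sub_eq_iff_eq_add h1).mp hc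
      have : m % p = j := by rw [hm', Nat.mul_add_mod, Nat.mod_eq_of_lt hjp]
      exact hjne this.symm
    · rfl
    · rfl

end CharPStuff

end FrobeniusAux
section MainAux

variable (p : ℕ) [hp : Fact p.Prime] [CharP Fq p]

lemma emb_decomp (R : Polynomial Fq) (ξ : K Fq) (i : ℕ) :
    emb Fq R * (ξ ^ p) ^ i
      = ∑ j ∈ Finset.range p,
          HahnSeries.single (-(j:ℤ)) 1 * (emb Fq (pieces Fq p R j) * ξ ^ i) ^ p := by
  conv_lhs => rw [← pieces_decomp Fq p R]
  rw [map_sum (emb Fq), Finset.sum_mul]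
  refine Finset.sum_congr rfl fun j _ => ?_
  rw [map_mul, map_pow, map_pow]
  have hX : emb Fq Polynomial.X = Tvar Fq := Polynomial.eval₂_X _ _
  have hT : Tvar Fq ^ j = HahnSeries.single (-(j:ℤ)) (1:Fq) := by
    unfold Tvar
    rw [HahnSeries.single_pow]
    norm_num
  have hp1 : (ξ ^ p) ^ i = (ξ ^ i) ^ p := pow_right_comm ξ p i
  rw [hX, hT, hp1, mul_pow]
  ring

lemma fracPart_decomp (R : Polynomial Fq) (ξ : K Fq) (i : ℕ) :
    fracPart Fq (emb Fq R * (ξ ^ p) ^ i)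
      = ∑ j ∈ Finset.range p, HahnSeries.single (-(j:ℤ)) 1 *
          fracPart Fq (emb Fq (pieces Fq p R j) * ξ ^ i) ^ p := by
  have hms : ∀ (s : Finset ℕ) (f : ℕ → K Fq),
      fracPart Fq (∑ j ∈ s, f j) = ∑ j ∈ s, fracPart Fq (f j) :=
    fun s f => map_sum (fracPartHom Fq) f s
  rw [emb_decomp Fq p R ξ i, hms]
  exact Finset.sum_congr rfl fun j hj =>
    fracPart_single_mul_pow_char Fq p j (Finset.mem_range.mp hj) _

lemma fracNorm_nonneg (x : K Fq) : 0 ≤ fracNorm Fq x := absK_nonneg Fq _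

lemma fracNorm_pow_char (x : K Fq) : fracNorm Fq (x ^ p) = fracNorm Fq x ^ p := by
  unfold fracNorm
  rw [fracPart_pow_char, absK_pow]

lemma fracNorm_pow_R (R : Polynomial Fq) (ξ : K Fq) (i : ℕ) :
    fracNorm Fq (emb Fq (R ^ p) * (ξ ^ p) ^ i) = fracNorm Fq (emb Fq R * ξ ^ i) ^ p := by
  rw [map_pow, pow_right_comm ξ p i, ← mul_pow, fracNorm_pow_char]

lemma fracNorm_piece_le (R : Polynomial Fq) (ξ : K Fq) (i j : ℕ) (hj : j < p) :
    fracNorm Fq (emb Fq (pieces Fq p R j) * ξ ^ i) ^ p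
      ≤ fracNorm Fq (emb Fq R * (ξ ^ p) ^ i) := by
  show absK Fq (fracPart Fq (emb Fq (pieces Fq p R j) * ξ ^ i)) ^ p
      ≤ absK Fq (fracPart Fq (emb Fq R * (ξ ^ p) ^ i))
  rw [fracPart_decomp Fq p R ξ i]
  by_cases hBj : fracPart Fq (emb Fq (pieces Fq p R j) * ξ ^ i) = 0
  · rw [hBj, absK_zero, zero_pow hp.out.ne_zero]
    exact absK_nonneg Fq _
  · exact absK_sum_single_pow_ge Fq p
      (fun j' => fracPart Fq (emb Fq (pieces Fq p R j') * ξ ^ i)) j hj hBj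

lemma maxFrac_nonempty (n : ℕ) (hn : 1 ≤ n) (g : ℕ → ℝ) :
    ((Finset.Icc 1 n).image g).Nonempty :=
  Finset.Nonempty.image ⟨1, Finset.mem_Icc.mpr ⟨le_rfl, hn⟩⟩ g

lemma maxFrac_eq_max' (ξ : K Fq) {n : ℕ} (hn : 1 ≤ n) (R : Polynomial Fq) :
    maxFrac Fq ξ n R
      = ((Finset.Icc 1 n).image fun i => fracNorm Fq (emb Fq R * ξ ^ i)).max'
          (maxFrac_nonempty n hn _) := by
  unfold maxFrac
  rw [← Finset.coe_Icc, ← Finset.coe_image]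
  exact Finset.Nonempty.csSup_eq_max' _


lemma le_maxFrac (ξ : K Fq) {n : ℕ} (hn : 1 ≤ n) (R : Polynomial Fq) {i : ℕ}
    (hi : i ∈ Finset.Icc 1 n) :
    fracNorm Fq (emb Fq R * ξ ^ i) ≤ maxFrac Fq ξ n R := by
  rw [maxFrac_eq_max' Fq ξ hn R]
  exact Finset.le_max' _ _
    (Finset.mem_image_of_mem (fun i => fracNorm Fq (emb Fq R * ξ ^ i)) hi)

lemma exists_maxFrac (ξ : K Fq) {n : ℕ} (hn : 1 ≤ n) (R : Polynomial Fq) :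
    ∃ i ∈ Finset.Icc 1 n, maxFrac Fq ξ n R = fracNorm Fq (emb Fq R * ξ ^ i) := by
  have h := Finset.max'_mem _ (maxFrac_nonempty n hn fun i => fracNorm Fq (emb Fq R * ξ ^ i))
  obtain ⟨i, hi, hgi⟩ := Finset.mem_image.mp h
  exact ⟨i, hi, by rw [maxFrac_eq_max' Fq ξ hn R, ← hgi]⟩

lemma rpow_pd (l : ℝ) (d : ℕ) :
    (Fintype.card Fq : ℝ) ^ (-(l * ((p * d : ℕ) : ℝ)))
      = ((Fintype.card Fq : ℝ) ^ (-(l * (d : ℝ)))) ^ p := by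
  rw [← Real.rpow_natCast ((Fintype.card Fq : ℝ) ^ (-(l * (d : ℝ)))) p,
    ← Real.rpow_mul (qcard_pos Fq).le]
  congr 1
  push_cast
  ring

lemma exists_piece_ne_zero (R : Polynomial Fq) (ξ : K Fq) (i : ℕ)
    (h : fracPart Fq (emb Fq R * (ξ ^ p) ^ i) ≠ 0) :
    ∃ j ∈ Finset.range p, fracPart Fq (emb Fq (pieces Fq p R j) * ξ ^ i) ≠ 0 := by
  by_contra hc
  push_neg at hc
  apply h
  rw [fracPart_decomp Fq p R ξ i]
  refine Finset.sum_eq_zero fun j hj => ?_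
  rw [hc j hj, zero_pow hp.out.ne_zero, mul_zero]

lemma hlamSet_pow_subset (ξ : K Fq) (n : ℕ) (hn : 1 ≤ n) :
    hlamSet Fq (ξ ^ p) n ⊆ hlamSet Fq ξ n := by
  rintro l ⟨d0, hd0⟩
  refine ⟨d0, fun d hd => ?_⟩
  obtain ⟨R, hRdeg, hRpos, hRlt⟩ :=
    hd0 (p * d) (lt_of_lt_of_le hd (Nat.le_mul_of_pos_left d hp.out.pos))
  obtain ⟨i₀, hi₀mem, hi₀⟩ := exists_maxFrac Fq (ξ ^ p) hn R
  have hfpos : fracPart Fq (emb Fq R * (ξ ^ p) ^ i₀) ≠ 0 := by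
    intro hc
    have h0 : 0 < fracNorm Fq (emb Fq R * (ξ ^ p) ^ i₀) := hi₀ ▸ hRpos
    unfold fracNorm at h0
    rw [hc, absK_zero] at h0
    exact lt_irrefl _ h0
  obtain ⟨j₀, hj₀mem, hj₀⟩ := exists_piece_ne_zero Fq p R ξ i₀ hfpos
  have hj₀p : j₀ < p := Finset.mem_range.mp hj₀mem
  refine ⟨pieces Fq p R j₀, pieces_natDegree_le Fq p R j₀ d hRdeg, ?_, ?_⟩
  · exact lt_of_lt_of_le (absK_pos Fq hj₀) (le_maxFrac Fq ξ hn _ hi₀mem)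
  · rw [maxFrac_eq_max' Fq ξ hn _, Finset.max'_lt_iff]
    rintro b hb
    obtain ⟨i, hi, rfl⟩ := Finset.mem_image.mp hb
    have key := fracNorm_piece_le Fq p R ξ i j₀ hj₀p
    have hle : fracNorm Fq (emb Fq R * (ξ ^ p) ^ i) ≤ maxFrac Fq (ξ ^ p) n R :=
      le_maxFrac Fq (ξ ^ p) hn R hi
    have hlt : fracNorm Fq (emb Fq (pieces Fq p R j₀) * ξ ^ i) ^ p
        < ((Fintype.card Fq : ℝ) ^ (-(l * (d : ℝ)))) ^ p := by
      rw [← rpow_pd Fq p l d]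
      exact lt_of_le_of_lt (le_trans key hle) hRlt
    exact lt_of_pow_lt_pow_left₀ p (Real.rpow_nonneg (qcard_pos Fq).le _) hlt

lemma hlamSet_pow_mem (ξ : K Fq) (n : ℕ) (hn : 1 ≤ n) {l l' : ℝ}
    (hl : l ∈ hlamSet Fq ξ n) (hl' : l' < l) : l' ∈ hlamSet Fq (ξ ^ p) n := by
  obtain ⟨d0, hd0⟩ := hl
  obtain ⟨N, hN⟩ : ∃ N : ℕ, l * p ≤ (l - l') * N := by
    rcases le_or_gt l 0 with h | h
    · refine ⟨0, ?_⟩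
      have h1 : l * p ≤ 0 := mul_nonpos_of_nonpos_of_nonneg h (Nat.cast_nonneg p)
      simpa using h1
    · obtain ⟨N, hN⟩ := exists_nat_ge (l * p / (l - l'))
      refine ⟨N, ?_⟩
      have hll' : (0:ℝ) < l - l' := by linarith
      calc l * p = l * p / (l - l') * (l - l') := by field_simp
        _ ≤ N * (l - l') := mul_le_mul_of_nonneg_right hN hll'.le
        _ = (l - l') * N := mul_comm _ _
  refine ⟨max (p * (d0 + 1)) N, fun d hd => ?_⟩
  have hd1 : p * (d0 + 1) < d := lt_of_le_of_lt (le_max_left _ _) hd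
  have hdN : (N : ℝ) ≤ (d : ℝ) := by
    exact_mod_cast (le_of_lt (lt_of_le_of_lt (le_max_right _ _) hd))
  set e := d / p with he
  have hde : d0 < e := by
    have h1 : d0 + 1 ≤ e := (Nat.le_div_iff_mul_le hp.out.pos).mpr
      (by rw [Nat.mul_comm]; omega)
    omega
  obtain ⟨R, hRdeg, hRpos, hRlt⟩ := hd0 e hde
  have hep : e * p ≤ d := Nat.div_mul_le_self d p
  refine ⟨R ^ p, ?_, ?_, ?_⟩
  · calc (R ^ p).natDegree ≤ p * R.natDegree := Polynomial.natDegree_pow_le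
      _ ≤ p * e := Nat.mul_le_mul_left p hRdeg
      _ ≤ d := by rw [Nat.mul_comm]; exact hep
  · obtain ⟨i₀, hi₀mem, hi₀⟩ := exists_maxFrac Fq ξ hn R
    have h0 : 0 < fracNorm Fq (emb Fq R * ξ ^ i₀) := hi₀ ▸ hRpos
    have h1 : 0 < fracNorm Fq (emb Fq (R ^ p) * (ξ ^ p) ^ i₀) := by
      rw [fracNorm_pow_R Fq p R ξ i₀]
      exact pow_pos h0 p
    exact lt_of_lt_of_le h1 (le_maxFrac Fq (ξ ^ p) hn _ hi₀mem)
  · rw [maxFrac_eq_max' Fq (ξ ^ p) hn _, Finset.max'_lt_iff]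
    rintro b hb
    obtain ⟨i, hi, rfl⟩ := Finset.mem_image.mp hb
    rw [fracNorm_pow_R Fq p R ξ i]
    have h1 : fracNorm Fq (emb Fq R * ξ ^ i) < (Fintype.card Fq : ℝ) ^ (-(l * (e : ℝ))) :=
      lt_of_le_of_lt (le_maxFrac Fq ξ hn R hi) hRlt
    have h2 : fracNorm Fq (emb Fq R * ξ ^ i) ^ p
        < ((Fintype.card Fq : ℝ) ^ (-(l * (e : ℝ)))) ^ p :=
      pow_lt_pow_left₀ h1 (fracNorm_nonneg Fq _) hp.out.ne_zero
    refine lt_of_lt_of_le h2 ?_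
    rw [← Real.rpow_natCast ((Fintype.card Fq : ℝ) ^ (-(l * (e : ℝ)))) p,
      ← Real.rpow_mul (qcard_pos Fq).le]
    apply Real.rpow_le_rpow_of_exponent_le (one_lt_qcard Fq).le
    have hep_le : (e : ℝ) * p ≤ d := by exact_mod_cast hep
    have hep_gt : (d : ℝ) - p < e * p := by
      have h3 := Nat.lt_div_mul_add (a := d) hp.out.pos
      have h4 : (d:ℝ) < e * p + p := by exact_mod_cast h3
      linarith
    rcases le_or_gt l 0 with hl0 | hl0
    · have h5 : l' * d ≤ l * d := mul_le_mul_of_nonneg_right hl'.le (Nat.cast_nonneg d)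
      nlinarith
    · have h6 : l * ((d:ℝ) - p) ≤ l * (e * p) := mul_le_mul_of_nonneg_left hep_gt.le hl0.le
      have h7 : (l - l') * (N:ℝ) ≤ (l - l') * d := mul_le_mul_of_nonneg_left hdN (by linarith)
      nlinarith

end MainAux
/-- `λ̂_n(ξ) = λ̂_n(ξ^p)`. -/
theorem hlam_frobenius (p : ℕ) [Fact p.Prime] (Fq : Type) [Field Fq] [Fintype Fq] [CharP Fq p]
    (ξ : K Fq) (n : ℕ) (hn : 1 ≤ n) :
    hlam Fq ξ n = hlam Fq (ξ ^ p) n := by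
  refine le_antisymm ?_ ?_
  · apply sSup_le
    rintro y ⟨l, hl, rfl⟩
    show (l : EReal) ≤ hlam Fq (ξ ^ p) n
    by_contra hcon
    rw [not_le] at hcon
    obtain ⟨x, hx1, hx2⟩ := EReal.exists_between_coe_real hcon
    have hxl : x < l := by exact_mod_cast hx2
    have hxmem : x ∈ hlamSet Fq (ξ ^ p) n := hlamSet_pow_mem Fq p ξ n hn hl hxl
    have hle : (x : EReal) ≤ hlam Fq (ξ ^ p) n := le_sSup ⟨x, hxmem, rfl⟩
    exact absurd (lt_of_le_of_lt hle hx1) (lt_irrefl _)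
  · exact sSup_le_sSup (Set.image_mono (hlamSet_pow_subset Fq p ξ n hn))

end
end MahlerKoksmaFq
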